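/- For every integer n ≥ 0 there is a unique W-submodule L ⊆ D₀ of rank 2 satisfying F₀(L) ⊆ L and V₀(L) ⊆ L and such that the torsion W-module D₀/L has finite length n. Explicitly, L = W·pʳe + W·pʳf if n = 2r is even, and L = W·p^{r+1}e + W·pʳf if n = 2r+1 is odd. -/

import Mathlib

noncomputable section

open Pointwise

/-- `k`, an algebraic closure of the field `𝔽_p` with `p` elements. -/
abbrev Kbar (p : ℕ) [Fact p.Prime] : Type _ := AlgebraicClosure (ZMod p)

/-- `W = W(k)`, the ring of Witt vectors with coefficients in `k`. -/
abbrev Wt (p : ℕ) [Fact p.Prime] : Type _ := WittVector p (Kbar p)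

/-- `σ : W → W`, the Witt vector Frobenius automorphism, lifting the `p`-th power map on `k`. -/
def σW (p : ℕ) [Fact p.Prime] : Wt p ≃+* Wt p := WittVector.frobeniusEquiv p (Kbar p)

/-- The Dieudonné module `D₀`, free of rank 2 over `W` with basis `e = (1,0)`, `f = (0,1)`. -/
abbrev D0 (p : ℕ) [Fact p.Prime] : Type _ := Wt p × Wt p

/-- The Frobenius `F₀` of `D₀`: `F₀ e = f`, `F₀ f = p e`, extended `σ`-semilinearly. -/
def F0 (p : ℕ) [Fact p.Prime] : D0 p → D0 p :=
  fun m => ((p : Wt p) * σW p m.2, σW p m.1)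

/-- The Verschiebung `V₀` of `D₀`: `V₀ e = f`, `V₀ f = p e`, extended `σ⁻¹`-semilinearly. -/
def V0 (p : ℕ) [Fact p.Prime] : D0 p → D0 p :=
  fun m => ((p : Wt p) * (σW p).symm m.2, (σW p).symm m.1)

/-- The predicate on a `W`-submodule `L ⊆ D₀`: `L` has rank 2, is stable under `F₀` and `V₀`,
and the torsion `W`-module `D₀/L` has finite length `n` (witnessed by a composition series
from `⊥` to `⊤` of length `n`). -/
def IsGoodSubmodule (p : ℕ) [Fact p.Prime] (n : ℕ) (L : Submodule (Wt p) (D0 p)) : Prop :=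
  Module.rank (Wt p) L = 2 ∧
  (∀ m ∈ L, F0 p m ∈ L) ∧
  (∀ m ∈ L, V0 p m ∈ L) ∧
  ∃ s : CompositionSeries (Submodule (Wt p) (D0 p ⧸ L)),
    s.head = ⊥ ∧ s.last = ⊤ ∧ s.length = n

namespace St0

instance (p : ℕ) [Fact p.Prime] : IsDiscreteValuationRing (Wt p) :=
  WittVector.isDiscreteValuationRing

variable {p : ℕ} [Fact p.Prime]

lemma p_ne : (p : Wt p) ≠ 0 := WittVector.p_nonzero p (Kbar p)

lemma p_not_unit : ¬ IsUnit (p : Wt p) := (WittVector.irreducible p).not_isUnit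

lemma pow_dvd_pow_iff' {a b : ℕ} : (p : Wt p)^a ∣ (p : Wt p)^b ↔ a ≤ b :=
  pow_dvd_pow_iff p_ne p_not_unit

lemma isUnit_of_not_dvd {a : Wt p} (h : ¬ (p : Wt p) ∣ a) : IsUnit a := by
  have ha : a ≠ 0 := by rintro rfl; exact h (dvd_zero _)
  obtain ⟨m, u, rfl⟩ := WittVector.exists_eq_pow_p_mul' a ha
  cases m with
  | zero => simpa using u.isUnit
  | succ m => exact absurd ⟨(p:Wt p)^m * u, by push_cast; ring⟩ h

lemma exists_unit_of_dvd_not_dvd {r : ℕ} {x : Wt p} (h1 : (p : Wt p)^r ∣ x)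
    (h2 : ¬ (p : Wt p)^(r+1) ∣ x) : ∃ u : Wt p, IsUnit u ∧ x = (p : Wt p)^r * u := by
  obtain ⟨c, rfl⟩ := h1
  refine ⟨c, isUnit_of_not_dvd (fun ⟨d, hd⟩ => h2 ⟨d, by rw [hd]; ring⟩), rfl⟩

lemma one_sub_mul_isUnit {a b : Wt p} (h : ¬ IsUnit a) : IsUnit (1 - a * b) := by
  rcases IsLocalRing.isUnit_or_isUnit_one_sub_self (a*b) with h' | h'
  · exact absurd (isUnit_of_mul_isUnit_left h') h
  · exact h'

lemma σ_p : σW p (p : Wt p) = p := map_natCast _ p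
lemma σ_symm_p : (σW p).symm (p : Wt p) = p := map_natCast _ p

/-- The lattice `p^⌈m/2⌉ W × p^⌊m/2⌋ W`. -/
def Lat (p : ℕ) [Fact p.Prime] (m : ℕ) : Submodule (Wt p) (D0 p) :=
  Submodule.prod (Ideal.span {(p : Wt p)^((m+1)/2)}) (Ideal.span {(p : Wt p)^(m/2)})

lemma mem_Lat {m : ℕ} {x : D0 p} :
    x ∈ Lat p m ↔ (p : Wt p)^((m+1)/2) ∣ x.1 ∧ (p : Wt p)^(m/2) ∣ x.2 := by
  simp [Lat, Submodule.mem_prod, Ideal.mem_span_singleton]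

lemma Lat_antitone {a b : ℕ} (h : a ≤ b) : Lat p b ≤ Lat p a := by
  intro x hx
  rw [mem_Lat] at hx ⊢
  exact ⟨(pow_dvd_pow _ (by omega)).trans hx.1, (pow_dvd_pow _ (by omega)).trans hx.2⟩

lemma Lat_zero : Lat p 0 = ⊤ := by
  rw [eq_top_iff]
  intro x _
  simp [mem_Lat]

lemma Lat_even (r : ℕ) :
    Lat p (2*r) = Submodule.span (Wt p) {((p : Wt p) ^ r, (0:Wt p)), ((0:Wt p), (p : Wt p) ^ r)} := by
  have h1 : (2*r+1)/2 = r := by omega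
  have h2 : (2*r)/2 = r := by omega
  apply le_antisymm
  · intro x hx
    rw [mem_Lat, h1, h2] at hx
    obtain ⟨⟨c, hc⟩, ⟨d, hd⟩⟩ := hx
    rw [Submodule.mem_span_pair]
    exact ⟨c, d, by simp [Prod.ext_iff, hc, hd, mul_comm]⟩
  · rw [Submodule.span_le]
    rintro y (rfl | rfl) <;> simp [mem_Lat, h1, h2]
lemma Lat_odd (r : ℕ) :
    Lat p (2*r+1) = Submodule.span (Wt p)
      {((p : Wt p) ^ (r+1), (0:Wt p)), ((0:Wt p), (p : Wt p) ^ r)} := by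
  have h1 : (2*r+1+1)/2 = r+1 := by omega
  have h2 : (2*r+1)/2 = r := by omega
  apply le_antisymm
  · intro x hx
    rw [mem_Lat, h1, h2] at hx
    obtain ⟨⟨c, hc⟩, ⟨d, hd⟩⟩ := hx
    rw [Submodule.mem_span_pair]
    exact ⟨c, d, by simp [Prod.ext_iff, hc, hd, mul_comm]⟩
  · rw [Submodule.span_le]
    rintro y (rfl | rfl) <;> simp [mem_Lat, h1, h2]

lemma σ_dvd {a : ℕ} {x : Wt p} (h : (p : Wt p)^a ∣ x) : (p : Wt p)^a ∣ σW p x := by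
  obtain ⟨c, rfl⟩ := h
  exact ⟨σW p c, by rw [map_mul, map_pow, σ_p]⟩

lemma σ_symm_dvd {a : ℕ} {x : Wt p} (h : (p : Wt p)^a ∣ x) : (p : Wt p)^a ∣ (σW p).symm x := by
  obtain ⟨c, rfl⟩ := h
  exact ⟨(σW p).symm c, by rw [map_mul, map_pow, σ_symm_p]⟩

lemma Lat_F_stable {m : ℕ} {x : D0 p} (hx : x ∈ Lat p m) : F0 p x ∈ Lat p m := by
  rw [mem_Lat] at hx ⊢
  refine ⟨?_, ?_⟩
  · exact (pow_dvd_pow _ (by omega : (m+1)/2 ≤ m/2 + 1)).trans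
      (by rw [pow_succ']; exact mul_dvd_mul_left _ (σ_dvd hx.2))
  · exact (pow_dvd_pow _ (by omega : m/2 ≤ (m+1)/2)).trans (σ_dvd hx.1)

lemma Lat_V_stable {m : ℕ} {x : D0 p} (hx : x ∈ Lat p m) : V0 p x ∈ Lat p m := by
  rw [mem_Lat] at hx ⊢
  refine ⟨?_, ?_⟩
  · exact (pow_dvd_pow _ (by omega : (m+1)/2 ≤ m/2 + 1)).trans
      (by rw [pow_succ']; exact mul_dvd_mul_left _ (σ_symm_dvd hx.2))
  · exact (pow_dvd_pow _ (by omega : m/2 ≤ (m+1)/2)).trans (σ_symm_dvd hx.1)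

lemma Lat_lt (m : ℕ) : Lat p (m+1) < Lat p m := by
  refine lt_of_le_of_ne (Lat_antitone (by omega)) (fun h => ?_)
  rcases Nat.even_or_odd m with ⟨r, hr⟩ | ⟨r, hr⟩
  · have hx : ((p : Wt p)^r, (0 : Wt p)) ∈ Lat p m := by
      rw [mem_Lat]
      exact ⟨pow_dvd_pow _ (by omega), dvd_zero _⟩
    rw [← h, mem_Lat] at hx
    exact absurd (pow_dvd_pow_iff'.1 hx.1) (by omega)
  · have hx : ((0 : Wt p), (p : Wt p)^r) ∈ Lat p m := by
      rw [mem_Lat]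
      exact ⟨dvd_zero _, pow_dvd_pow _ (by omega)⟩
    rw [← h, mem_Lat] at hx
    exact absurd (pow_dvd_pow_iff'.1 hx.2) (by omega)

lemma Lat_covby (m : ℕ) : Lat p (m+1) ⋖ Lat p m := by
  refine ⟨Lat_lt m, fun N hN1 hN2 => ?_⟩
  obtain ⟨x, hxN, hx1⟩ := SetLike.exists_of_lt hN1
  have hxm : x ∈ Lat p m := hN2.le hxN
  rw [mem_Lat] at hxm
  rw [mem_Lat] at hx1
  push_neg at hx1
  refine not_le_of_gt hN2 (fun y hy => ?_)
  rw [mem_Lat] at hy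
  rcases Nat.even_or_odd m with ⟨r, hr⟩ | ⟨r, hr⟩
  · -- m = 2r : x.1 = p^r * unit
    have e1 : (m+1)/2 = r := by omega
    have e2 : m/2 = r := by omega
    have e3 : (m+1+1)/2 = r+1 := by omega
    rw [e1, e2] at hxm hy
    rw [e3, e1] at hx1
    have hx1' : ¬ (p : Wt p)^(r+1) ∣ x.1 := fun hd => (hx1 hd) hxm.2
    obtain ⟨u, hu, hxu⟩ := exists_unit_of_dvd_not_dvd hxm.1 hx1'
    obtain ⟨c, hc⟩ := hy.1
    obtain ⟨v, hv⟩ := hu.exists_right_inv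
    have key : y - (c * v) • x ∈ Lat p (m+1) := by
      rw [mem_Lat, e3, e1]
      constructor
      · have h0 : (y - (c * v) • x).1 = 0 := by
          show y.1 - (c * v) * x.1 = 0
          rw [hc, hxu]; ring_nf; rw [mul_assoc, mul_comm v u, hv]; ring
        rw [h0]
        exact dvd_zero _
      · exact dvd_sub hy.2 (hxm.2.mul_left _)
    have := N.add_mem (N.smul_mem (c * v) hxN) (hN1.le key)
    simpa using this
  · -- m = 2r+1 : x.2 = p^r * unit
    have e1 : (m+1)/2 = r+1 := by omega
    have e2 : m/2 = r := by omega
    have e3 : (m+1+1)/2 = r+1 := by omega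
    rw [e1, e2] at hxm hy
    rw [e3, e1] at hx1
    have hx2' : ¬ (p : Wt p)^(r+1) ∣ x.2 := fun hd => (hx1 hxm.1) hd
    obtain ⟨u, hu, hxu⟩ := exists_unit_of_dvd_not_dvd hxm.2 hx2'
    obtain ⟨d, hd⟩ := hy.2
    obtain ⟨v, hv⟩ := hu.exists_right_inv
    have key : y - (d * v) • x ∈ Lat p (m+1) := by
      rw [mem_Lat, e3, e1]
      constructor
      · exact dvd_sub hy.1 (hxm.1.mul_left _)
      · have h0 : (y - (d * v) • x).2 = 0 := by
          show y.2 - (d * v) * x.2 = 0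
          rw [hd, hxu]; ring_nf; rw [mul_assoc, mul_comm v u, hv]; ring
        rw [h0]
        exact dvd_zero _
    have := N.add_mem (N.smul_mem (d * v) hxN) (hN1.le key)
    simpa using this

lemma Lat_rank (m : ℕ) : Module.rank (Wt p) (Lat p m) = 2 := by
  set a := (m+1)/2
  set b := m/2
  let g : D0 p →ₗ[Wt p] D0 p :=
    (((p : Wt p)^a) • LinearMap.id).prodMap (((p : Wt p)^b) • LinearMap.id)
  have hg : Function.Injective g := by
    intro x y hxy
    have h1 : (p : Wt p)^a * x.1 = (p : Wt p)^a * y.1 := congrArg Prod.fst hxy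
    have h2 : (p : Wt p)^b * x.2 = (p : Wt p)^b * y.2 := congrArg Prod.snd hxy
    exact Prod.ext (mul_left_cancel₀ (pow_ne_zero _ p_ne) h1)
      (mul_left_cancel₀ (pow_ne_zero _ p_ne) h2)
  have hr : LinearMap.range g = Lat p m := by
    ext y
    constructor
    · rintro ⟨x, rfl⟩
      rw [mem_Lat]
      exact ⟨⟨x.1, rfl⟩, ⟨x.2, rfl⟩⟩
    · intro hy
      rw [mem_Lat] at hy
      obtain ⟨⟨c, hc⟩, ⟨d, hd⟩⟩ := hy
      exact ⟨(c, d), by simp [g, a, b, Prod.ext_iff, hc, hd]⟩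
  have := LinearEquiv.rank_eq (LinearEquiv.ofInjective g hg)
  rw [hr] at this
  rw [← this, rank_prod', Module.rank_self]
  norm_num

lemma covby_subtype {M : Type*} [AddCommGroup M] [Module (Wt p) M] {L A B : Submodule (Wt p) M}
    (hA : L ≤ A) (hB : L ≤ B) (h : A ⋖ B) :
    (⟨A, hA⟩ : {N : Submodule (Wt p) M // L ≤ N}) ⋖ ⟨B, hB⟩ := by
  refine ⟨Subtype.mk_lt_mk.2 h.1, fun c hc1 hc2 => ?_⟩
  exact h.2 (Subtype.mk_lt_mk.1 (show (⟨A, hA⟩ : {N : Submodule (Wt p) M // L ≤ N}) < ⟨c.1, c.2⟩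
    from hc1)) (Subtype.mk_lt_mk.1 (show (⟨c.1, c.2⟩ : {N : Submodule (Wt p) M // L ≤ N}) < ⟨B, hB⟩
    from hc2))

lemma map_mkQ_covby {L A B : Submodule (Wt p) (D0 p)} (hA : L ≤ A) (hB : L ≤ B) (h : A ⋖ B) :
    Submodule.map L.mkQ A ⋖ Submodule.map L.mkQ B := by
  have := (apply_covBy_apply_iff
    ((Submodule.comapMkQRelIso L).symm : {N : Submodule (Wt p) (D0 p) // L ≤ N} ≃o
      Submodule (Wt p) (D0 p ⧸ L))).2 (covby_subtype hA hB h)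
  exact this

lemma exists_compositionSeries (m : ℕ) :
    ∃ s : CompositionSeries (Submodule (Wt p) (D0 p ⧸ Lat p m)),
      s.head = ⊥ ∧ s.last = ⊤ ∧ s.length = m := by
  refine ⟨⟨m, fun i => Submodule.map (Lat p m).mkQ (Lat p (m - i.val)), fun i => ?_⟩, ?_, ?_, rfl⟩
  · show Submodule.map (Lat p m).mkQ (Lat p (m - i.castSucc.val)) ⋖
      Submodule.map (Lat p m).mkQ (Lat p (m - i.succ.val))
    rw [Fin.coe_castSucc, Fin.val_succ]
    have key : m - i.val = (m - (i.val+1)) + 1 := by omega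
    rw [key]
    exact map_mkQ_covby (Lat_antitone (by omega)) (Lat_antitone (by omega)) (Lat_covby _)
  · show Submodule.map (Lat p m).mkQ (Lat p (m - (0 : Fin (m+1)).val)) = ⊥
    rw [Fin.val_zero, Nat.sub_zero, eq_bot_iff]
    rintro y ⟨x, hx, rfl⟩
    simpa [Submodule.mkQ_apply, Submodule.mem_bot, Submodule.Quotient.mk_eq_zero] using hx
  · show Submodule.map (Lat p m).mkQ (Lat p (m - (Fin.last m).val)) = ⊤
    rw [Fin.val_last, Nat.sub_self, Lat_zero, Submodule.map_top, Submodule.range_mkQ]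

lemma smul_mem_of_covby {M : Type*} [AddCommGroup M] [Module (Wt p) M]
    {A B : Submodule (Wt p) M} (h : A ⋖ B) {x : M} (hx : x ∈ B) : (p : Wt p) • x ∈ A := by
  by_cases hxA : x ∈ A
  · exact A.smul_mem _ hxA
  by_contra hpx
  have hlt : A < A ⊔ Submodule.span (Wt p) {(p : Wt p) • x} := by
    refine lt_of_le_of_ne le_sup_left (fun hEq => hpx ?_)
    rw [hEq]
    exact SetLike.le_def.1 le_sup_right (Submodule.mem_span_singleton_self _)
  have hle : A ⊔ Submodule.span (Wt p) {(p : Wt p) • x} ≤ B :=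
    sup_le h.1.le (Submodule.span_le.2 (by simpa using B.smul_mem (p : Wt p) hx))
  rcases h.wcovBy.eq_or_eq hlt.le hle with hEq | hEq
  · exact hlt.ne' hEq
  -- x ∈ B = A ⊔ span {p • x}
  have hxB : x ∈ A ⊔ Submodule.span (Wt p) {(p : Wt p) • x} := hEq ▸ hx
  rw [Submodule.mem_sup] at hxB
  obtain ⟨a, haA, y, hy, hxy⟩ := hxB
  rw [Submodule.mem_span_singleton] at hy
  obtain ⟨c, rfl⟩ := hy
  -- x = a + c • p • x  ⇒  (1 - p*c) • x = a
  have hu : IsUnit (1 - (p : Wt p) * c) := one_sub_mul_isUnit p_not_unit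
  obtain ⟨v, hv⟩ := hu.exists_left_inv
  have key : (1 - (p : Wt p) * c) • x = a := by
    have ha : a = x - c • ((p : Wt p) • x) := (eq_sub_of_add_eq hxy)
    rw [ha, sub_smul, one_smul, smul_smul, mul_comm (p : Wt p) c]
  have : x ∈ A := by
    have := A.smul_mem v (key ▸ haA)
    rwa [← smul_assoc, smul_eq_mul, hv, one_smul] at this
  exact hxA this

lemma pow_smul_eq_zero_of_series {M : Type*} [AddCommGroup M] [Module (Wt p) M]
    {n : ℕ} (s : CompositionSeries (Submodule (Wt p) M))
    (hh : s.head = ⊥) (hl : s.last = ⊤) (hn : s.length = n) (x : M) :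
    (p : Wt p) ^ n • x = 0 := by
  subst hn
  have main : ∀ i : ℕ, ∀ hi : i ≤ s.length, ∀ y : M, y ∈ s.toFun ⟨i, by omega⟩ →
      (p : Wt p) ^ i • y ∈ s.toFun ⟨0, by omega⟩ := by
    intro i
    induction i with
    | zero => intro hi y hy; simpa using hy
    | succ i ih =>
      intro hi y hy
      have hstep := s.step ⟨i, by omega⟩
      have h1 : (p : Wt p) • y ∈ s.toFun ⟨i, by omega⟩ := by
        have : s.toFun (Fin.castSucc ⟨i, by omega⟩) = s.toFun ⟨i, by omega⟩ := rfl
        exact smul_mem_of_covby (this ▸ hstep) (by exact hy)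
      have := ih (by omega) _ h1
      rw [pow_succ, mul_smul]
      exact this
  have hx : x ∈ s.toFun ⟨s.length, by omega⟩ := by
    have : s.toFun ⟨s.length, by omega⟩ = ⊤ := by
      rw [← hl]; rfl
    rw [this]; trivial
  have := main s.length le_rfl x hx
  rw [show s.toFun ⟨0, by omega⟩ = ⊥ from by rw [← hh]; rfl] at this
  simpa using this

lemma key_step {L : Submodule (Wt p) (D0 p)} (hF : ∀ x ∈ L, F0 p x ∈ L)
    (hV : ∀ x ∈ L, V0 p x ∈ L) {q : ℕ} {x : D0 p}
    (hxL : x ∈ L) (hx1 : x ∈ Lat p q) (hx2 : x ∉ Lat p (q+1)) :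
    Lat p q ≤ L ⊔ Lat p (q+2) := by
  rcases Nat.even_or_odd q with ⟨r, hr⟩ | ⟨r, hr⟩
  · -- q = 2r
    have e1 : (q+1)/2 = r := by omega
    have e2 : q/2 = r := by omega
    have e3 : (q+1+1)/2 = r+1 := by omega
    have e4 : (q+2+1)/2 = r+1 := by omega
    have e5 : (q+2)/2 = r+1 := by omega
    rw [mem_Lat, e1, e2] at hx1
    rw [mem_Lat, e3, e1] at hx2
    push_neg at hx2
    have hx1' : ¬ (p:Wt p)^(r+1) ∣ x.1 := fun hdd => (hx2 hdd) hx1.2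
    obtain ⟨u, hu, hxu⟩ := exists_unit_of_dvd_not_dvd hx1.1 hx1'
    obtain ⟨b, hb⟩ := hx1.2
    obtain ⟨v, hv⟩ := hu.exists_right_inv
    intro y hy
    rw [mem_Lat, e1, e2] at hy
    obtain ⟨c, hc⟩ := hy.1
    obtain ⟨d, hd⟩ := hy.2
    have hσ1 : σW p x.1 = (p:Wt p)^r * σW p u := by rw [hxu, map_mul, map_pow, σ_p]
    have hσ2 : σW p x.2 = (p:Wt p)^r * σW p b := by rw [hb, map_mul, map_pow, σ_p]
    have hσv : σW p u * σW p v = 1 := by rw [← map_mul, hv, map_one]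
    refine Submodule.mem_sup.2 ⟨(c*v) • x + ((d - c*v*b) * σW p v) • F0 p x,
      L.add_mem (L.smul_mem _ hxL) (L.smul_mem _ (hF x hxL)),
      y - ((c*v) • x + ((d - c*v*b) * σW p v) • F0 p x), ?_, by abel⟩
    rw [mem_Lat, e4, e5]
    constructor
    · show (p:Wt p)^(r+1) ∣
        y.1 - ((c*v) * x.1 + ((d - c*v*b) * σW p v) * ((p:Wt p) * σW p x.2))
      refine ⟨-((d - c*v*b) * σW p v * σW p b), ?_⟩
      rw [hc, hxu, hσ2]
      linear_combination (-((p:Wt p)^r * c)) * hv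
    · show (p:Wt p)^(r+1) ∣
        y.2 - ((c*v) * x.2 + ((d - c*v*b) * σW p v) * σW p x.1)
      refine ⟨0, ?_⟩
      rw [hd, hb, hσ1]
      linear_combination (-((p:Wt p)^r * (d - c*v*b))) * hσv
  · -- q = 2r+1
    have e1 : (q+1)/2 = r+1 := by omega
    have e2 : q/2 = r := by omega
    have e3 : (q+1+1)/2 = r+1 := by omega
    have e4 : (q+2+1)/2 = r+2 := by omega
    have e5 : (q+2)/2 = r+1 := by omega
    rw [mem_Lat, e1, e2] at hx1
    rw [mem_Lat, e3, e1] at hx2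
    push_neg at hx2
    have hx2' : ¬ (p:Wt p)^(r+1) ∣ x.2 := fun hdd => (hx2 hx1.1) hdd
    obtain ⟨u, hu, hxu⟩ := exists_unit_of_dvd_not_dvd hx1.2 hx2'
    obtain ⟨a, ha⟩ := hx1.1
    obtain ⟨v, hv⟩ := hu.exists_right_inv
    intro y hy
    rw [mem_Lat, e1, e2] at hy
    obtain ⟨c, hc⟩ := hy.1
    obtain ⟨d, hd⟩ := hy.2
    have hσ1 : (σW p).symm x.1 = (p:Wt p)^(r+1) * (σW p).symm a := by
      rw [ha, map_mul, map_pow, σ_symm_p]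
    have hσ2 : (σW p).symm x.2 = (p:Wt p)^r * (σW p).symm u := by
      rw [hxu, map_mul, map_pow, σ_symm_p]
    have hσv : (σW p).symm u * (σW p).symm v = 1 := by rw [← map_mul, hv, map_one]
    refine Submodule.mem_sup.2 ⟨(d*v) • x + ((c - d*v*a) * (σW p).symm v) • V0 p x,
      L.add_mem (L.smul_mem _ hxL) (L.smul_mem _ (hV x hxL)),
      y - ((d*v) • x + ((c - d*v*a) * (σW p).symm v) • V0 p x), ?_, by abel⟩
    rw [mem_Lat, e4, e5]
    constructor
    · show (p:Wt p)^(r+2) ∣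
        y.1 - ((d*v) * x.1 + ((c - d*v*a) * (σW p).symm v) * ((p:Wt p) * (σW p).symm x.2))
      refine ⟨0, ?_⟩
      rw [hc, ha, hσ2]
      linear_combination (-((p:Wt p)^(r+1) * (c - d*v*a))) * hσv
    · show (p:Wt p)^(r+1) ∣
        y.2 - ((d*v) * x.2 + ((c - d*v*a) * (σW p).symm v) * (σW p).symm x.1)
      refine ⟨-((c - d*v*a) * (σW p).symm v * (σW p).symm a), ?_⟩
      rw [hd, hxu, hσ1]
      linear_combination (-((p:Wt p)^r * d)) * hv

lemma pow_dvd_of_pow_dvd_mul {a j : ℕ} {t : Wt p}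
    (h : (p:Wt p)^(a+j) ∣ (p:Wt p)^j * t) : (p:Wt p)^a ∣ t := by
  obtain ⟨c, hc⟩ := h
  refine ⟨c, mul_left_cancel₀ (pow_ne_zero j p_ne) ?_⟩
  rw [hc, pow_add]; ring

lemma good_lat (n : ℕ) : IsGoodSubmodule p n (Lat p n) :=
  ⟨Lat_rank n, fun x hx => Lat_F_stable hx, fun x hx => Lat_V_stable hx,
    exists_compositionSeries n⟩

lemma good_eq_lat {n : ℕ} {L : Submodule (Wt p) (D0 p)} (h : IsGoodSubmodule p n L) :
    L = Lat p n := by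
  obtain ⟨-, hF, hV, s, hh, hl, hn⟩ := h
  have hkill : ∀ y : D0 p, (p:Wt p)^n • y ∈ L := by
    intro y
    have := pow_smul_eq_zero_of_series s hh hl hn (Submodule.Quotient.mk y : D0 p ⧸ L)
    rwa [← Submodule.Quotient.mk_smul, Submodule.Quotient.mk_eq_zero] at this
  have h2n : Lat p (2*n) ≤ L := by
    intro x hx
    rw [mem_Lat, (by omega : (2*n+1)/2 = n), (by omega : (2*n)/2 = n)] at hx
    obtain ⟨c, hc⟩ := hx.1
    obtain ⟨d, hd⟩ := hx.2
    have hx' : x = (p:Wt p)^n • (c, d) := Prod.ext hc hd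
    rw [hx']
    exact hkill _
  have hPex : ∃ j, ¬ L ≤ Lat p j := by
    refine ⟨2*n+2, fun hle => ?_⟩
    have hmem : ((p:Wt p)^n, (0:Wt p)) ∈ L := by
      have := hkill (1, 0)
      simpa using this
    have := hle hmem
    rw [mem_Lat, (by omega : (2*n+2+1)/2 = n+1)] at this
    exact absurd (pow_dvd_pow_iff'.1 this.1) (by omega)
  classical
  have hspec : ¬ L ≤ Lat p (Nat.find hPex) := Nat.find_spec hPex
  have hpos : Nat.find hPex ≠ 0 := by
    intro h0
    rw [h0, Lat_zero] at hspec
    exact hspec le_top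
  obtain ⟨m, hm⟩ : ∃ m, Nat.find hPex = m + 1 := ⟨Nat.find hPex - 1, by omega⟩
  have hLm : L ≤ Lat p m := not_not.1 (Nat.find_min hPex (by omega))
  have hnot : ¬ L ≤ Lat p (m+1) := hm ▸ hspec
  obtain ⟨x, hxL, hx2⟩ := SetLike.not_le_iff_exists.1 hnot
  have hx1 : x ∈ Lat p m := hLm hxL
  have main : ∀ j : ℕ, Lat p m ≤ L ⊔ Lat p (m + 2*j) := by
    intro j
    induction j with
    | zero => rw [show m + 2*0 = m by omega]; exact le_sup_right
    | succ j ih =>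
      have hxj : (p:Wt p)^j • x ∈ L := L.smul_mem _ hxL
      have hxj1 : (p:Wt p)^j • x ∈ Lat p (m + 2*j) := by
        rw [mem_Lat] at hx1 ⊢
        constructor
        · show (p:Wt p)^((m+2*j+1)/2) ∣ (p:Wt p)^j * x.1
          rw [show (m+2*j+1)/2 = (m+1)/2 + j by omega, pow_add, mul_comm ((p:Wt p)^((m+1)/2))]
          exact mul_dvd_mul_left _ hx1.1
        · show (p:Wt p)^((m+2*j)/2) ∣ (p:Wt p)^j * x.2
          rw [show (m+2*j)/2 = m/2 + j by omega, pow_add, mul_comm ((p:Wt p)^(m/2))]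
          exact mul_dvd_mul_left _ hx1.2
      have hxj2 : (p:Wt p)^j • x ∉ Lat p (m + 2*j + 1) := by
        intro hmem
        rw [mem_Lat] at hmem
        refine hx2 ?_
        rw [mem_Lat]
        constructor
        · refine pow_dvd_of_pow_dvd_mul (j := j) ?_
          rw [show (m+1+1)/2 + j = (m+2*j+1+1)/2 by omega]
          exact hmem.1
        · refine pow_dvd_of_pow_dvd_mul (j := j) ?_
          rw [show (m+1)/2 + j = (m+2*j+1)/2 by omega]
          exact hmem.2
      have step := key_step hF hV hxj hxj1 hxj2
      rw [show m + 2*(j+1) = m + 2*j + 2 by omega]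
      calc Lat p m ≤ L ⊔ Lat p (m+2*j) := ih
        _ ≤ L ⊔ (L ⊔ Lat p (m+2*j+2)) := sup_le_sup_left step _
        _ = L ⊔ Lat p (m+2*j+2) := by rw [← sup_assoc, sup_idem]
  have hLatm : Lat p m ≤ L := by
    have h' : Lat p (m + 2*n) ≤ L := (Lat_antitone (by omega : 2*n ≤ m + 2*n)).trans h2n
    calc Lat p m ≤ L ⊔ Lat p (m+2*n) := main n
      _ ≤ L ⊔ L := sup_le_sup_left h' _
      _ = L := sup_idem _
  have hLM : L = Lat p m := le_antisymm hLm hLatm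
  subst hLM
  obtain ⟨t, th, tl, tlen⟩ := exists_compositionSeries (p := p) m
  have hmn : m = n := by
    have := (CompositionSeries.jordan_holder s t (by rw [hh, th]) (by rw [hl, tl])).length_eq
    omega
  rw [hmn]

end St0

/-- for every `n ≥ 0` there is a unique rank-2 submodule `L ⊆ D₀` stable under
`F₀` and `V₀` with `D₀/L` of finite length `n`; explicitly `L = ⟨pʳe, pʳf⟩` if `n = 2r`
and `L = ⟨p^{r+1}e, pʳf⟩` if `n = 2r + 1`. -/
theorem statement0 (p : ℕ) [Fact p.Prime] (hp : Odd p) (n : ℕ) :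
    (∃! L : Submodule (Wt p) (D0 p), IsGoodSubmodule p n L) ∧
    (∀ r : ℕ, n = 2 * r →
      IsGoodSubmodule p n
        (Submodule.span (Wt p) {((p : Wt p) ^ r, 0), (0, (p : Wt p) ^ r)})) ∧
    (∀ r : ℕ, n = 2 * r + 1 →
      IsGoodSubmodule p n
        (Submodule.span (Wt p) {((p : Wt p) ^ (r + 1), 0), (0, (p : Wt p) ^ r)})) := by
  refine ⟨⟨St0.Lat p n, St0.good_lat n, fun L hL => St0.good_eq_lat hL⟩, ?_, ?_⟩
  · rintro r rfl
    rw [← St0.Lat_even]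
    exact St0.good_lat _
  · rintro r rfl
    rw [← St0.Lat_odd]
    exact St0.good_lat _
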